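/- For A ∈ {0,1,2}^n and g ∈ {1,2}, the normalized volume in ℤ^{2n} of C_{2,n} ∩ {x : S_{A,g}(x) ≤ 2 − ∑a_i} equals 2^n − n/2^{n−1}. -/

import Mathlib

open MeasureTheory Finset

/-- `u_0=(1,2), u_1=(1,−1), u_2=(−2,−1)`. -/
noncomputable def uVec : Fin 3 → Fin 2 → ℝ := ![![1, 2], ![1, -1], ![-2, -1]]

/-- `w_0=(2,1), w_1=(−1,1), w_2=(−1,−2)`. -/
noncomputable def wVec : Fin 3 → Fin 2 → ℝ := ![![2, 1], ![-1, 1], ![-1, -2]]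

open scoped ENNReal
section Aux
open Matrix

lemma vol_simplex : ∀ (m : ℕ) (c : ℝ), 0 ≤ c →
    volume {x : Fin m → ℝ | (∀ i, 0 ≤ x i) ∧ ∑ i, x i ≤ c}
      = ENNReal.ofReal (c ^ m / m.factorial) := by
  intro m
  induction m with
  | zero =>
    intro c hc
    have : {x : Fin 0 → ℝ | (∀ i, 0 ≤ x i) ∧ ∑ i, x i ≤ c} = Set.univ := by
      ext x; simp [hc, Fin.forall_fin_zero_pi]
    rw [this]
    simp [MeasureTheory.volume_pi]
  | succ m ih =>
    intro c hc
    have hmp := (volume_preserving_piFinSuccAbove (fun _ : Fin (m+1) => ℝ) 0)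
    set e := MeasurableEquiv.piFinSuccAbove (fun _ : Fin (m+1) => ℝ) 0 with he
    set S' : Set (ℝ × (Fin m → ℝ)) :=
      {p | (0 ≤ p.1 ∧ ∀ i, 0 ≤ p.2 i) ∧ p.1 + ∑ i, p.2 i ≤ c} with hS'
    have hS'm : MeasurableSet S' := by
      have h1 : IsClosed {p : ℝ × (Fin m → ℝ) | 0 ≤ p.1} :=
        isClosed_le continuous_const continuous_fst
      have h2 : IsClosed {p : ℝ × (Fin m → ℝ) | ∀ i, 0 ≤ p.2 i} := by
        rw [Set.setOf_forall]
        exact isClosed_iInter fun i =>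
          isClosed_le continuous_const ((continuous_apply i).comp continuous_snd)
      have h3 : IsClosed {p : ℝ × (Fin m → ℝ) | p.1 + ∑ i, p.2 i ≤ c} :=
        isClosed_le (continuous_fst.add
          (continuous_finset_sum _ fun i _ => (continuous_apply i).comp continuous_snd))
          continuous_const
      have : S' = ({p : ℝ × (Fin m → ℝ) | 0 ≤ p.1} ∩ {p | ∀ i, 0 ≤ p.2 i})
          ∩ {p | p.1 + ∑ i, p.2 i ≤ c} := by
        ext p; simp only [hS', Set.mem_setOf_eq, Set.mem_inter_iff]
      rw [this]
      exact ((h1.inter h2).inter h3).measurableSet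
    have hpre : {x : Fin (m+1) → ℝ | (∀ i, 0 ≤ x i) ∧ ∑ i, x i ≤ c} = e ⁻¹' S' := by
      ext x
      have hex : e x = (x 0, fun j => x (Fin.succ j)) := by
        simp [he, MeasurableEquiv.piFinSuccAbove, Fin.succAbove_zero]
        rfl
      simp only [Set.mem_setOf_eq, Set.mem_preimage, hex, hS', Fin.forall_fin_succ,
        Fin.sum_univ_succ]
    rw [hpre, hmp.measure_preimage hS'm.nullMeasurableSet]
    rw [Measure.volume_eq_prod, Measure.prod_apply hS'm]
    have hsec : ∀ t : ℝ, volume (Prod.mk t ⁻¹' S')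
        = Set.indicator (Set.Icc 0 c)
            (fun t => ENNReal.ofReal ((c - t) ^ m / m.factorial)) t := by
      intro t
      by_cases ht : 0 ≤ t ∧ t ≤ c
      · have : Prod.mk t ⁻¹' S' = {y : Fin m → ℝ | (∀ i, 0 ≤ y i) ∧ ∑ i, y i ≤ c - t} := by
          ext y
          simp only [Set.mem_preimage, hS', Set.mem_setOf_eq, ht.1, true_and]
          constructor
          · rintro ⟨h1, h2⟩; exact ⟨h1, by linarith⟩
          · rintro ⟨h1, h2⟩; exact ⟨h1, by linarith⟩
        rw [this, ih _ (by linarith [ht.2]),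
          Set.indicator_of_mem (Set.mem_Icc.2 ht)]
      · rw [Set.indicator_of_notMem (by simpa [Set.mem_Icc] using ht)]
        have : Prod.mk t ⁻¹' S' = ∅ := by
          ext y
          simp only [Set.mem_preimage, hS', Set.mem_setOf_eq, Set.mem_empty_iff_false,
            iff_false]
          rintro ⟨⟨h1, h2⟩, h3⟩
          have : 0 ≤ ∑ i, y i := Finset.sum_nonneg fun i _ => h2 i
          have : t ≤ c := by linarith
          exact ht ⟨h1, this⟩
        rw [this]; simp
    simp_rw [hsec]
    rw [lintegral_indicator measurableSet_Icc]
    have hint : IntegrableOn (fun t : ℝ => (c - t) ^ m / m.factorial) (Set.Icc 0 c) := by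
      apply Continuous.integrableOn_Icc
      continuity
    rw [← ofReal_integral_eq_lintegral_ofReal hint]
    · congr 1
      rw [MeasureTheory.integral_Icc_eq_integral_Ioc, ← intervalIntegral.integral_of_le hc]
      rw [intervalIntegral.integral_div]
      have : (∫ t in (0:ℝ)..c, (c - t) ^ m) = ∫ t in (0:ℝ)..c, t ^ m := by
        have := intervalIntegral.integral_comp_sub_left (a := (0:ℝ)) (b := c)
          (fun t => t ^ m) c
        simpa using this
      rw [this, integral_pow]
      rw [Nat.factorial_succ]
      push_cast
      field_simp
      simp
    · filter_upwards [ae_restrict_mem measurableSet_Icc] with t ht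
      have : 0 ≤ c - t := by linarith [ht.2]
      positivity


lemma isClosed_cube (m : ℕ) : MeasurableSet {x : Fin m → ℝ | (∀ i, 0 ≤ x i ∧ x i ≤ 1) ∧ ∑ i, x i ≤ 2} := by
  have h2 : IsClosed {x : Fin m → ℝ | ∀ i, 0 ≤ x i ∧ x i ≤ 1} := by
    rw [Set.setOf_forall]
    refine isClosed_iInter fun i => ?_
    have : {x : Fin m → ℝ | 0 ≤ x i ∧ x i ≤ 1} =
        {x : Fin m → ℝ | 0 ≤ x i} ∩ {x | x i ≤ 1} := rfl
    rw [this]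
    exact (isClosed_le continuous_const (continuous_apply i)).inter
      (isClosed_le (continuous_apply i) continuous_const)
  have h3 : IsClosed {x : Fin m → ℝ | ∑ i, x i ≤ 2} :=
    isClosed_le (continuous_finset_sum _ fun i _ => continuous_apply i) continuous_const
  exact (h2.inter h3).measurableSet

lemma vol_cube (m : ℕ) :
    volume {x : Fin m → ℝ | (∀ i, 0 ≤ x i ∧ x i ≤ 1) ∧ ∑ i, x i ≤ 2}
      = ENNReal.ofReal ((2 ^ m - m) / m.factorial) := by
  classical
  set K := {x : Fin m → ℝ | (∀ i, 0 ≤ x i ∧ x i ≤ 1) ∧ ∑ i, x i ≤ 2} with hK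
  set B : Fin m → Set (Fin m → ℝ) :=
    fun i => {x | ((∀ j, 0 ≤ x j) ∧ ∑ j, x j ≤ 2) ∧ 1 ≤ x i} with hB
  have hKm : MeasurableSet K := isClosed_cube m
  have hBm : ∀ i, MeasurableSet (B i) := by
    intro i
    have h1 : IsClosed {x : Fin m → ℝ | ∀ j, 0 ≤ x j} := by
      rw [Set.setOf_forall]
      exact isClosed_iInter fun j => isClosed_le continuous_const (continuous_apply j)
    have h3 : IsClosed {x : Fin m → ℝ | ∑ j, x j ≤ 2} :=
      isClosed_le (continuous_finset_sum _ fun j _ => continuous_apply j) continuous_const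
    have h4 : IsClosed {x : Fin m → ℝ | 1 ≤ x i} :=
      isClosed_le continuous_const (continuous_apply i)
    have : B i = ({x : Fin m → ℝ | ∀ j, 0 ≤ x j} ∩ {x | ∑ j, x j ≤ 2}) ∩ {x | 1 ≤ x i} := rfl
    rw [this]; exact (((h1.inter h3)).inter h4).measurableSet
  -- hyperplanes are null
  have hnull : ∀ i : Fin m, volume {x : Fin m → ℝ | x i = 1} = 0 := by
    intro i
    rw [MeasureTheory.volume_pi]
    exact Measure.pi_hyperplane _ i 1
  -- B i has the volume of the simplex
  have hBvol : ∀ i, volume (B i) = ENNReal.ofReal (1 / m.factorial) := by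
    intro i
    have hpre : B i = (fun x : Fin m → ℝ => x + (-(Pi.single i 1)))
        ⁻¹' {y : Fin m → ℝ | (∀ j, 0 ≤ y j) ∧ ∑ j, y j ≤ 1} := by
      ext x
      simp only [Set.mem_preimage, Set.mem_setOf_eq, hB, Pi.add_apply, Pi.neg_apply]
      constructor
      · rintro ⟨⟨h1, h2⟩, h3⟩
        refine ⟨fun j => ?_, ?_⟩
        · by_cases hj : j = i
          · subst hj; simp [Pi.single_eq_same]; linarith
          · simp [Pi.single_eq_of_ne hj]; exact h1 j
        · have hs1 : ∑ j : Fin m, -(Pi.single i 1 : Fin m → ℝ) j = -1 := by simp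
          rw [Finset.sum_add_distrib, hs1]
          linarith
      · rintro ⟨h1, h2⟩
        have hxi : 1 ≤ x i := by
          have := h1 i; simp [Pi.single_eq_same] at this; linarith
        refine ⟨⟨fun j => ?_, ?_⟩, hxi⟩
        · by_cases hj : j = i
          · subst hj; linarith
          · have := h1 j; simp [Pi.single_eq_of_ne hj] at this; exact this
        · have hs : ∑ j, (x j + -(Pi.single i 1 : Fin m → ℝ) j) ≤ 1 := h2
          have hs1 : ∑ j : Fin m, -(Pi.single i 1 : Fin m → ℝ) j = -1 := by simp
          rw [Finset.sum_add_distrib, hs1] at hs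
          linarith
    rw [hpre]
    have hmp : MeasurePreserving (fun x : Fin m → ℝ => x + (-(Pi.single i 1))) volume volume :=
      measurePreserving_add_right volume _
    have hsm : MeasurableSet {y : Fin m → ℝ | (∀ j, 0 ≤ y j) ∧ ∑ j, y j ≤ 1} := by
      have h1 : IsClosed {x : Fin m → ℝ | ∀ j, 0 ≤ x j} := by
        rw [Set.setOf_forall]
        exact isClosed_iInter fun j => isClosed_le continuous_const (continuous_apply j)
      have h3 : IsClosed {x : Fin m → ℝ | ∑ j, x j ≤ 1} :=
        isClosed_le (continuous_finset_sum _ fun j _ => continuous_apply j) continuous_const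
      exact (h1.inter h3).measurableSet
    rw [hmp.measure_preimage hsm.nullMeasurableSet]
    have := vol_simplex m 1 (by norm_num)
    simpa using this
  -- decomposition
  have hU : {x : Fin m → ℝ | (∀ j, 0 ≤ x j) ∧ ∑ j, x j ≤ 2} = K ∪ ⋃ i, B i := by
    ext x
    simp only [Set.mem_setOf_eq, Set.mem_union, Set.mem_iUnion, hK, hB]
    constructor
    · rintro ⟨h1, h2⟩
      by_cases hx : ∀ i, x i ≤ 1
      · exact Or.inl ⟨fun i => ⟨h1 i, hx i⟩, h2⟩
      · push_neg at hx
        obtain ⟨i, hi⟩ := hx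
        exact Or.inr ⟨i, ⟨h1, h2⟩, le_of_lt hi⟩
    · rintro (⟨h1, h2⟩ | ⟨i, ⟨h1, h2⟩, _⟩)
      · exact ⟨fun i => (h1 i).1, h2⟩
      · exact ⟨h1, h2⟩
  have hKB : ∀ i, K ∩ B i ⊆ {x | x i = 1} := by
    rintro i x ⟨hxK, hxB⟩
    exact le_antisymm (hxK.1 i).2 hxB.2
  have hBB : ∀ i j, i ≠ j → B i ∩ B j ⊆ {x | x i = 1} := by
    rintro i j hij x ⟨hxi, hxj⟩
    have hsum : x i + x j ≤ ∑ k, x k := by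
      have hsub : ({i, j} : Finset (Fin m)) ⊆ univ := subset_univ _
      have := Finset.sum_le_sum_of_subset_of_nonneg hsub
        (fun k _ _ => hxi.1.1 k)
      rwa [Finset.sum_pair hij] at this
    have h1 : 1 ≤ x i := hxi.2
    have h2 : 1 ≤ x j := hxj.2
    have h3 : ∑ k, x k ≤ 2 := hxi.1.2
    simp only [Set.mem_setOf_eq]
    linarith
  -- measure additivity
  have hdisjKU : volume (K ∩ ⋃ i, B i) = 0 := by
    rw [Set.inter_iUnion]
    refine measure_iUnion_null fun i => measure_mono_null (hKB i) (hnull i)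
  have hBpair : Pairwise (Function.onFun (AEDisjoint volume) B) := by
    intro i j hij
    exact measure_mono_null (hBB i j hij) (hnull i)
  have hUvol : volume (⋃ i, B i) = ∑ i, volume (B i) := by
    rw [measure_iUnion₀ hBpair (fun i => (hBm i).nullMeasurableSet), tsum_fintype]
  have htot := vol_simplex m 2 (by norm_num)
  rw [hU, measure_union₀ (MeasurableSet.iUnion hBm).nullMeasurableSet hdisjKU] at htot
  rw [hUvol] at htot
  have hBsum : ∑ i : Fin m, volume (B i) = ENNReal.ofReal (m / m.factorial) := by
    simp_rw [hBvol]
    rw [Finset.sum_const, card_univ, Fintype.card_fin, nsmul_eq_mul,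
      ← ENNReal.ofReal_natCast, ← ENNReal.ofReal_mul (Nat.cast_nonneg m)]
    congr 1
    field_simp
  rw [hBsum] at htot
  have hmle : (m : ℝ) ≤ 2 ^ m := by
    exact_mod_cast (Nat.lt_two_pow_self (n := m)).le
  have hsplit : ENNReal.ofReal ((2:ℝ) ^ m / m.factorial)
      = ENNReal.ofReal ((2 ^ m - m) / m.factorial) + ENNReal.ofReal (m / m.factorial) := by
    rw [← ENNReal.ofReal_add]
    · congr 1; field_simp; ring
    · apply div_nonneg (by linarith) (by positivity)
    · positivity
  rw [hsplit] at htot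
  exact ((ENNReal.add_left_inj (by simp)).1 htot)



noncomputable def Bmat : Fin 3 → Fin 2 → Matrix (Fin 2) (Fin 2) ℝ :=
  ![![!![1, 1; 0, 1], !![1, 1; 1, 0]],
    ![!![0, -1; 1, 0], !![-1, 0; 0, 1]],
    ![!![-1, 0; -1, -1], !![0, -1; -1, -1]]]

noncomputable def cst : Fin 3 → Fin 2 → Fin 2 → ℝ :=
  ![![![0, 0], ![0, 0]], ![![1, 0], ![1, 0]], ![![1, 1], ![1, 1]]]

lemma Bmat_det (a : Fin 3) (g : Fin 2) : |(Bmat a g).det| = 1 := by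
  fin_cases a <;> fin_cases g <;>
    simp [Bmat, Matrix.det_fin_two_of]

lemma block_iff (a : Fin 3) (g : Fin 2) (y1 y2 : ℝ) :
    ((0 ≤ y1 ∧ 0 ≤ y2 ∧ y1 + y2 ≤ 1) ↔
      (((0 ≤ Bmat a g 0 0 * y1 + Bmat a g 0 1 * y2 + cst a g 0 ∧
          Bmat a g 0 0 * y1 + Bmat a g 0 1 * y2 + cst a g 0 ≤ 1) ∧
        (0 ≤ Bmat a g 1 0 * y1 + Bmat a g 1 1 * y2 + cst a g 1 ∧
          Bmat a g 1 0 * y1 + Bmat a g 1 1 * y2 + cst a g 1 ≤ 1)) ∧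
        Bmat a g 1 0 * y1 + Bmat a g 1 1 * y2 + cst a g 1 ≤
          Bmat a g 0 0 * y1 + Bmat a g 0 1 * y2 + cst a g 0)) := by
  fin_cases a <;> fin_cases g <;>
    · simp [Bmat, cst, Matrix.vecHead, Matrix.vecTail]
      constructor
      · rintro ⟨h1, h2, h3⟩
        refine ⟨⟨⟨?_, ?_⟩, ?_, ?_⟩, ?_⟩ <;> linarith
      · rintro ⟨⟨⟨h1, h2⟩, h3, h4⟩, h5⟩
        refine ⟨?_, ?_, ?_⟩ <;> linarith

lemma block_sum (a : Fin 3) (g : Fin 2) (y1 y2 : ℝ) :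
    (Bmat a g 0 0 * y1 + Bmat a g 0 1 * y2 + cst a g 0) +
      (Bmat a g 1 0 * y1 + Bmat a g 1 1 * y2 + cst a g 1)
      = (if g = 0 then uVec else wVec) a 0 * y1
        + (if g = 0 then uVec else wVec) a 1 * y2 + (a : ℕ) := by
  fin_cases a <;> fin_cases g <;>
    · simp [Bmat, cst, uVec, wVec, Matrix.vecHead, Matrix.vecTail]
      try ring


lemma mp_affine {ι : Type*} [Fintype ι] [DecidableEq ι] (M : Matrix ι ι ℝ) (hM : |M.det| = 1)
    (c : ι → ℝ) : MeasurePreserving (fun x => M.toLin' x + c) volume volume := by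
  have hd : M.det ≠ 0 := by intro h; rw [h] at hM; simp at hM
  have h1 : MeasurePreserving (M.toLin' : (ι → ℝ) → (ι → ℝ)) volume volume := by
    refine ⟨(LinearMap.continuous_on_pi _).measurable, ?_⟩
    rw [Real.map_matrix_volume_pi_eq_smul_volume_pi hd, abs_inv, hM]
    simp
  exact (measurePreserving_add_right volume c).comp h1

lemma meas_cube {ι : Type*} [Fintype ι] :
    MeasurableSet {x : ι → ℝ | (∀ i, 0 ≤ x i ∧ x i ≤ 1) ∧ ∑ i, x i ≤ 2} := by
  have h2 : IsClosed {x : ι → ℝ | ∀ i, 0 ≤ x i ∧ x i ≤ 1} := by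
    rw [Set.setOf_forall]
    refine isClosed_iInter fun i => ?_
    exact ((isClosed_le continuous_const (continuous_apply i)).inter
      (isClosed_le (continuous_apply i) continuous_const) :
        IsClosed ({x : ι → ℝ | 0 ≤ x i} ∩ {x | x i ≤ 1}))
  have h3 : IsClosed {x : ι → ℝ | ∑ i, x i ≤ 2} :=
    isClosed_le (continuous_finset_sum _ fun i _ => continuous_apply i) continuous_const
  exact (h2.inter h3).measurableSet

lemma vol_cubeI (n : ℕ) :
    volume {x : Fin n × Fin 2 → ℝ | (∀ p, 0 ≤ x p ∧ x p ≤ 1) ∧ ∑ p, x p ≤ 2}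
      = ENNReal.ofReal ((2 ^ (2 * n) - (2 * n : ℕ)) / ((2 * n).factorial)) := by
  have e : Fin (2 * n) ≃ Fin n × Fin 2 :=
    (finCongr (Nat.mul_comm 2 n)).trans finProdFinEquiv.symm
  set F := MeasurableEquiv.piCongrLeft (fun _ : Fin n × Fin 2 => ℝ) e with hFdef
  have hmp := volume_measurePreserving_piCongrLeft (fun _ : Fin n × Fin 2 => ℝ) e
  have hF : ∀ (x : Fin (2 * n) → ℝ) (p : Fin n × Fin 2), F x p = x (e.symm p) := by
    intro x p
    conv_lhs => rw [show p = e (e.symm p) from (e.apply_symm_apply p).symm]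
    exact MeasurableEquiv.piCongrLeft_apply_apply (β := fun _ => ℝ) e x (e.symm p)
  have hpre : F ⁻¹' {x : Fin n × Fin 2 → ℝ | (∀ p, 0 ≤ x p ∧ x p ≤ 1) ∧ ∑ p, x p ≤ 2}
      = {x : Fin (2 * n) → ℝ | (∀ i, 0 ≤ x i ∧ x i ≤ 1) ∧ ∑ i, x i ≤ 2} := by
    ext x
    simp only [Set.mem_preimage, Set.mem_setOf_eq, hF]
    constructor
    · rintro ⟨h1, h2⟩
      refine ⟨fun i => ?_, ?_⟩
      · have := h1 (e i); rwa [e.symm_apply_apply] at this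
      · rwa [Equiv.sum_comp e.symm x] at h2
    · rintro ⟨h1, h2⟩
      refine ⟨fun p => h1 _, ?_⟩
      rwa [Equiv.sum_comp e.symm x]
  rw [← hmp.measure_preimage meas_cube.nullMeasurableSet, hpre, vol_cube (2 * n)]

lemma null_diag (n : ℕ) (j : Fin n) :
    volume {x : Fin n × Fin 2 → ℝ | x (j, 0) = x (j, 1)} = 0 := by
  classical
  set M := Matrix.transvection ((j, (0 : Fin 2))) ((j, (1 : Fin 2))) (-1 : ℝ) with hM
  have hdet : |M.det| = 1 := by
    rw [hM, Matrix.det_transvection_of_ne _ _ (by simp) _]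
    norm_num
  have hmp := mp_affine M hdet 0
  have happ : ∀ x : Fin n × Fin 2 → ℝ, (M.toLin' x + 0) (j, 0) = x (j, 0) - x (j, 1) := by
    intro x
    simp only [Matrix.toLin'_apply, hM, Matrix.transvection, Matrix.add_mulVec,
      Matrix.one_mulVec, Matrix.single_mulVec, Pi.add_apply, Function.update_self,
      Pi.zero_apply, add_zero]
    ring
  have hpre : {x : Fin n × Fin 2 → ℝ | x (j, 0) = x (j, 1)}
      = (fun x : Fin n × Fin 2 → ℝ => M.toLin' x + 0) ⁻¹' {y | y (j, 0) = 0} := by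
    ext x
    simp only [Set.mem_preimage, Set.mem_setOf_eq, happ]
    constructor <;> intro h <;> linarith
  rw [hpre]
  apply hmp.quasiMeasurePreserving.preimage_null
  rw [MeasureTheory.volume_pi]
  exact Measure.pi_hyperplane _ _ 0


lemma meas_Es (n : ℕ) (s : Fin n → Bool) :
    MeasurableSet {z : Fin n × Fin 2 → ℝ | (∀ p, 0 ≤ z p ∧ z p ≤ 1) ∧
      (∀ j, if s j then z (j, 1) ≤ z (j, 0) else z (j, 0) ≤ z (j, 1)) ∧ ∑ p, z p ≤ 2} := by
  have h1 : IsClosed {z : Fin n × Fin 2 → ℝ | ∀ p, 0 ≤ z p ∧ z p ≤ 1} := by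
    rw [Set.setOf_forall]
    refine isClosed_iInter fun p => ?_
    exact ((isClosed_le continuous_const (continuous_apply p)).inter
      (isClosed_le (continuous_apply p) continuous_const) :
        IsClosed ({z : Fin n × Fin 2 → ℝ | 0 ≤ z p} ∩ {z | z p ≤ 1}))
  have h2 : IsClosed {z : Fin n × Fin 2 → ℝ |
      ∀ j, if s j then z (j, 1) ≤ z (j, 0) else z (j, 0) ≤ z (j, 1)} := by
    rw [Set.setOf_forall]
    refine isClosed_iInter fun j => ?_
    by_cases h : s j <;> simp only [h, if_true, if_false] <;>
      exact isClosed_le (continuous_apply _) (continuous_apply _)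
  have h3 : IsClosed {z : Fin n × Fin 2 → ℝ | ∑ p, z p ≤ 2} :=
    isClosed_le (continuous_finset_sum _ fun p _ => continuous_apply p) continuous_const
  exact (h1.inter (h2.inter h3)).measurableSet

lemma vol_D (n : ℕ) :
    (2 ^ n : ℝ≥0∞) * volume {z : Fin n × Fin 2 → ℝ | (∀ p, 0 ≤ z p ∧ z p ≤ 1) ∧
        (∀ j, z (j, 1) ≤ z (j, 0)) ∧ ∑ p, z p ≤ 2}
      = ENNReal.ofReal ((2 ^ (2 * n) - (2 * n : ℕ)) / ((2 * n).factorial)) := by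
  classical
  set D := {z : Fin n × Fin 2 → ℝ | (∀ p, 0 ≤ z p ∧ z p ≤ 1) ∧
    (∀ j, z (j, 1) ≤ z (j, 0)) ∧ ∑ p, z p ≤ 2} with hD
  set E : (Fin n → Bool) → Set (Fin n × Fin 2 → ℝ) := fun s =>
    {z | (∀ p, 0 ≤ z p ∧ z p ≤ 1) ∧
      (∀ j, if s j then z (j, 1) ≤ z (j, 0) else z (j, 0) ≤ z (j, 1)) ∧ ∑ p, z p ≤ 2} with hE
  have hDE : D = E (fun _ => true) := by
    ext z; simp [hD, hE]
  have hDmeas : MeasurableSet D := hDE ▸ meas_Es n (fun _ => true)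
  have hEvol : ∀ s, volume (E s) = volume D := by
    intro s
    set g : (Fin n × Fin 2) → (Fin n × Fin 2) :=
      fun p => (p.1, if s p.1 then p.2 else Equiv.swap 0 1 p.2) with hg
    have hgg : ∀ p, g (g p) = p := by
      rintro ⟨j, i⟩; by_cases h : s j <;> simp [hg, h, Equiv.swap_apply_self]
    set es : Fin n × Fin 2 ≃ Fin n × Fin 2 := ⟨g, g, hgg, hgg⟩ with hes
    set F := MeasurableEquiv.piCongrLeft (fun _ : Fin n × Fin 2 => ℝ) es with hFdef
    have hmp := volume_measurePreserving_piCongrLeft (fun _ : Fin n × Fin 2 => ℝ) es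
    have hF : ∀ (x : Fin n × Fin 2 → ℝ) (p : Fin n × Fin 2), F x p = x (g p) := by
      intro x p
      have h1 : p = es (es.symm p) := (es.apply_symm_apply p).symm
      conv_lhs => rw [h1]
      rw [MeasurableEquiv.piCongrLeft_apply_apply (β := fun _ => ℝ) es x (es.symm p)]
      congr 1
    have hpre : F ⁻¹' D = E s := by
      ext x
      simp only [Set.mem_preimage, hD, hE, Set.mem_setOf_eq, hF]
      constructor
      · rintro ⟨h1, h2, h3⟩
        refine ⟨fun p => ?_, fun j => ?_, ?_⟩
        · have := h1 (g p); rwa [hgg] at this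
        · have := h2 j
          by_cases h : s j <;> simp [hg, h, Equiv.swap_apply_left] at this ⊢ <;>
            [exact this; exact this]
        · have : ∑ p, x (g p) = ∑ p, x p := Equiv.sum_comp es x
          rwa [this] at h3
      · rintro ⟨h1, h2, h3⟩
        refine ⟨fun p => h1 _, fun j => ?_, ?_⟩
        · have := h2 j
          by_cases h : s j <;> simp [hg, h, Equiv.swap_apply_left] at this ⊢ <;>
            [exact this; exact this]
        · have : ∑ p, x (g p) = ∑ p, x p := Equiv.sum_comp es x
          rwa [this]
    rw [← hpre, hmp.measure_preimage hDmeas.nullMeasurableSet]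
  have hcover : {x : Fin n × Fin 2 → ℝ | (∀ p, 0 ≤ x p ∧ x p ≤ 1) ∧ ∑ p, x p ≤ 2}
      = ⋃ s, E s := by
    ext x
    simp only [Set.mem_setOf_eq, Set.mem_iUnion, hE]
    constructor
    · rintro ⟨h1, h2⟩
      refine ⟨fun j => decide (x (j, 1) ≤ x (j, 0)), h1, fun j => ?_, h2⟩
      by_cases h : x (j, 1) ≤ x (j, 0) <;> simp [h]
      exact le_of_not_ge h
    · rintro ⟨s, h1, _, h3⟩
      exact ⟨h1, h3⟩
  have hpairwise : Pairwise (Function.onFun (AEDisjoint volume) E) := by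
    intro s t hst
    obtain ⟨j, hj⟩ := Function.ne_iff.1 hst
    refine measure_mono_null (fun x hx => ?_) (null_diag n j)
    obtain ⟨hx1, hx2⟩ := hx
    have h1 := hx1.2.1 j
    have h2 := hx2.2.1 j
    simp only [Set.mem_setOf_eq]
    cases hsj : s j <;> cases htj : t j
    · rw [hsj, htj] at hj; exact absurd rfl hj
    · rw [hsj] at h1; rw [htj] at h2; simp at h1 h2
      exact le_antisymm h1 h2
    · rw [hsj] at h1; rw [htj] at h2; simp at h1 h2
      exact le_antisymm h2 h1
    · rw [hsj, htj] at hj; exact absurd rfl hj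
  have hunion : volume (⋃ s, E s) = ∑ s : Fin n → Bool, volume (E s) := by
    rw [measure_iUnion₀ hpairwise (fun s => (meas_Es n s).nullMeasurableSet), tsum_fintype]
  have := vol_cubeI n
  rw [hcover, hunion] at this
  simp_rw [hEvol] at this
  rw [Finset.sum_const, Finset.card_univ] at this
  rw [nsmul_eq_mul] at this
  have hcard : (Fintype.card (Fin n → Bool) : ℝ≥0∞) = 2 ^ n := by
    simp [Fintype.card_fun]
  rwa [hcard] at this

lemma meas_D (n : ℕ) : MeasurableSet {z : Fin n × Fin 2 → ℝ | (∀ p, 0 ≤ z p ∧ z p ≤ 1) ∧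
    (∀ j, z (j, 1) ≤ z (j, 0)) ∧ ∑ p, z p ≤ 2} := by
  have hDE : {z : Fin n × Fin 2 → ℝ | (∀ p, 0 ≤ z p ∧ z p ≤ 1) ∧
      (∀ j, z (j, 1) ≤ z (j, 0)) ∧ ∑ p, z p ≤ 2}
      = {z : Fin n × Fin 2 → ℝ | (∀ p, 0 ≤ z p ∧ z p ≤ 1) ∧
      (∀ j, if (fun _ : Fin n => true) j then z (j, 1) ≤ z (j, 0) else z (j, 0) ≤ z (j, 1)) ∧
        ∑ p, z p ≤ 2} := by
    ext z; simp
  exact hDE ▸ meas_Es n (fun _ => true)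

end Aux

/-- For `A ∈ {0,1,2}^n` and `g ∈ {1,2}`, the normalized volume in `ℤ^{2n}` of
`C_{2,n} ∩ {S_{A,g} ≤ 2 − ∑ a_i}` equals `2^n − n/2^(n−1)`. -/
theorem stmt17 (n : ℕ) (A : Fin n → Fin 3) (g : Fin 2) :
    ((2 * n).factorial : ℝ) *
        (volume {x : Fin n × Fin 2 → ℝ |
          (∀ p, 0 ≤ x p) ∧ (∀ j, x (j, 0) + x (j, 1) ≤ 1) ∧
          ∑ j, ((if g = 0 then uVec else wVec) (A j) 0 * x (j, 0)
                + (if g = 0 then uVec else wVec) (A j) 1 * x (j, 1))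
            ≤ 2 - ∑ j, ((A j : ℕ) : ℝ)}).toReal
      = 2 ^ n - n / 2 ^ (n - 1) := by
  classical
  set D := {z : Fin n × Fin 2 → ℝ | (∀ p, 0 ≤ z p ∧ z p ≤ 1) ∧
    (∀ j, z (j, 1) ≤ z (j, 0)) ∧ ∑ p, z p ≤ 2} with hD
  set Bl : Fin n → Matrix (Fin 2) (Fin 2) ℝ := fun j => Bmat (A j) g with hBl
  set M : Matrix (Fin n × Fin 2) (Fin n × Fin 2) ℝ :=
    (Matrix.blockDiagonal Bl).submatrix (Equiv.prodComm (Fin n) (Fin 2))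
      (Equiv.prodComm (Fin n) (Fin 2)) with hM
  have hdet : |M.det| = 1 := by
    rw [hM, Matrix.det_submatrix_equiv_self, Matrix.det_blockDiagonal, Finset.abs_prod]
    rw [Finset.prod_congr rfl (fun j _ => Bmat_det (A j) g)]
    simp
  set cvec : Fin n × Fin 2 → ℝ := fun p => cst (A p.1) g p.2 with hcvec
  have hmp := mp_affine M hdet cvec
  set Φ : (Fin n × Fin 2 → ℝ) → (Fin n × Fin 2 → ℝ) := fun x => M.toLin' x + cvec with hΦ
  have hMapp : ∀ (j : Fin n) (i : Fin 2) (j' : Fin n) (i' : Fin 2),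
      M (j, i) (j', i') = if j = j' then Bmat (A j) g i i' else 0 := by
    intro j i j' i'
    rw [hM]
    simp only [Matrix.submatrix_apply, Equiv.prodComm_apply, Prod.swap_prod_mk]
    rw [Matrix.blockDiagonal_apply]
  have happ : ∀ (x : Fin n × Fin 2 → ℝ) (j : Fin n) (i : Fin 2),
      Φ x (j, i) = Bmat (A j) g i 0 * x (j, 0) + Bmat (A j) g i 1 * x (j, 1)
        + cst (A j) g i := by
    intro x j i
    simp only [hΦ, Pi.add_apply, Matrix.toLin'_apply, Matrix.mulVec, dotProduct]
    rw [Fintype.sum_prod_type]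
    rw [Finset.sum_eq_single j]
    · simp only [hMapp, if_pos rfl]
      rw [Fin.sum_univ_two]
      rfl
    · intro j' _ hj'
      simp only [hMapp, if_neg (Ne.symm hj')]
      simp
    · intro h; exact absurd (Finset.mem_univ j) h
  have hblock : ∀ (x : Fin n × Fin 2 → ℝ) (j : Fin n),
      ((0 ≤ x (j, 0) ∧ 0 ≤ x (j, 1) ∧ x (j, 0) + x (j, 1) ≤ 1) ↔
        (((0 ≤ Φ x (j, 0) ∧ Φ x (j, 0) ≤ 1) ∧ (0 ≤ Φ x (j, 1) ∧ Φ x (j, 1) ≤ 1)) ∧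
          Φ x (j, 1) ≤ Φ x (j, 0))) := by
    intro x j
    rw [happ x j 0, happ x j 1]
    exact block_iff (A j) g _ _
  have hsum : ∀ x : Fin n × Fin 2 → ℝ, ∑ p, Φ x p
      = (∑ j, ((if g = 0 then uVec else wVec) (A j) 0 * x (j, 0)
          + (if g = 0 then uVec else wVec) (A j) 1 * x (j, 1))) + ∑ j, ((A j : ℕ) : ℝ) := by
    intro x
    rw [Fintype.sum_prod_type]
    have : ∀ j : Fin n, ∑ i, Φ x (j, i)
        = (if g = 0 then uVec else wVec) (A j) 0 * x (j, 0)
          + (if g = 0 then uVec else wVec) (A j) 1 * x (j, 1) + ((A j : ℕ) : ℝ) := by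
      intro j
      rw [Fin.sum_univ_two, happ x j 0, happ x j 1]
      exact block_sum (A j) g _ _
    rw [Finset.sum_congr rfl (fun j _ => this j), Finset.sum_add_distrib]
  have hpre : {x : Fin n × Fin 2 → ℝ |
      (∀ p, 0 ≤ x p) ∧ (∀ j, x (j, 0) + x (j, 1) ≤ 1) ∧
      ∑ j, ((if g = 0 then uVec else wVec) (A j) 0 * x (j, 0)
            + (if g = 0 then uVec else wVec) (A j) 1 * x (j, 1))
        ≤ 2 - ∑ j, ((A j : ℕ) : ℝ)} = Φ ⁻¹' D := by
    ext x
    simp only [Set.mem_setOf_eq, Set.mem_preimage, hD]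
    constructor
    · rintro ⟨h1, h2, h3⟩
      have hb : ∀ j, (((0 ≤ Φ x (j, 0) ∧ Φ x (j, 0) ≤ 1) ∧ (0 ≤ Φ x (j, 1) ∧ Φ x (j, 1) ≤ 1)) ∧
          Φ x (j, 1) ≤ Φ x (j, 0)) :=
        fun j => (hblock x j).1 ⟨h1 (j, 0), h1 (j, 1), h2 j⟩
      refine ⟨?_, fun j => (hb j).2, ?_⟩
      · rintro ⟨j, i⟩
        fin_cases i
        · exact (hb j).1.1
        · exact (hb j).1.2
      · rw [hsum x]; linarith
    · rintro ⟨h1, h2, h3⟩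
      have hb : ∀ j, (0 ≤ x (j, 0) ∧ 0 ≤ x (j, 1) ∧ x (j, 0) + x (j, 1) ≤ 1) :=
        fun j => (hblock x j).2 ⟨⟨h1 (j, 0), h1 (j, 1)⟩, h2 j⟩
      refine ⟨?_, fun j => (hb j).2.2, ?_⟩
      · rintro ⟨j, i⟩
        fin_cases i
        · exact (hb j).1
        · exact (hb j).2.1
      · rw [hsum x] at h3; linarith
  rw [hpre, hmp.measure_preimage (meas_D n).nullMeasurableSet]
  -- now use vol_D
  have hvD := vol_D n
  rw [← hD] at hvD
  have h2n : (0:ℝ) ≤ (2 ^ (2 * n) - (2 * n : ℕ)) / ((2 * n).factorial) := by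
    apply div_nonneg _ (by positivity)
    have : ((2 * n : ℕ) : ℝ) ≤ 2 ^ (2 * n) := by
      exact_mod_cast (Nat.lt_two_pow_self (n := 2 * n)).le
    linarith
  have htr := congrArg ENNReal.toReal hvD
  rw [ENNReal.toReal_mul, ENNReal.toReal_ofReal h2n] at htr
  have hpow : ((2 : ℝ≥0∞) ^ n).toReal = (2 : ℝ) ^ n := by
    simp
  rw [hpow] at htr
  have hDfin : (volume D).toReal
      = (2 ^ (2 * n) - (2 * n : ℕ)) / ((2 * n).factorial) / 2 ^ n := by
    field_simp at htr ⊢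
    linarith
  rw [hDfin, div_div]
  rcases n with _ | k
  · norm_num
  · have hfact : ((2 * (k + 1)).factorial : ℝ) ≠ 0 := by positivity
    have h4 : (2 : ℝ) ^ (2 * (k + 1)) = 2 ^ (k + 1) * 2 ^ (k + 1) := by
      rw [two_mul, pow_add]
    rw [show (k + 1) - 1 = k from rfl, h4]
    push_cast
    field_simp
    ring
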